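/- arXiv:2512.06704 — 2 statements merged into one kernel-verified Lean document; each statement's English description precedes it below -/
import Mathlib

section
/- Let f ∈ A depend only on the single variable u, and let α, β, γ, δ, ε ∈ ℂ. Then the master-formula λ-bracket with generator coefficients P_{(2,0)} = α·f·S₁²(f), P_{(1,1)} = β·f·S₁S₂(f), P_{(0,2)} = γ·f·S₂²(f), P_{(1,0)} = δ·f·S₁(f), P_{(0,1)} = ε·f·S₂(f), together with P_{−L} = −S^{−L}(P_L) for L ∈ {(2,0),(1,1),(0,2),(1,0),(0,1)} and P_T = 0 otherwise — corresponding to the difference operator P = f(u)(α S₁² + β S₁S₂ + γ S₂² + δ S₁ + ε S₂ − α S₁^{−2} − β S₁^{−1}S₂^{−1} − γ S₂^{−2} − δ S₁^{−1} − ε S₂^{−1})∘f(u) — is skewsymmetric and satisfies the PVA-Jacobi identity for all triples of elements of A; i.e. P is a Hamiltonian difference operator. -/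
open MvPolynomial

namespace MPVA

/-- The algebra of difference polynomials in `ℓ` generators on a `D`-dimensional lattice:
polynomials over `ℂ` in the variables `u^i_N`, `i ∈ Fin ℓ`, `N ∈ ℤ^D`. -/
abbrev A (ℓ D : ℕ) := MvPolynomial (Fin ℓ × (Fin D → ℤ)) ℂ

variable {ℓ D : ℕ}

/-- The shift automorphism `S^M` sending `u^i_N` to `u^i_{N+M}`. -/
noncomputable def Sh (M : Fin D → ℤ) : A ℓ D ≃ₐ[ℂ] A ℓ D :=
  renameEquiv ℂ ((Equiv.refl (Fin ℓ)).prodCongr (Equiv.addRight M))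

/-- The `α`-th standard basis vector `E_α ∈ ℤ^D`. -/
def E (α : Fin D) : Fin D → ℤ := fun β => if β = α then 1 else 0

/-- Coefficient `B_T(f,g)` of `λ^T` in the master-formula λ-bracket `{f_λ g}` determined
by the generator coefficients `{u^i_λ u^j} = Σ_T (P j i T)·λ^T`:
`{f_λ g} = Σ_{i,j,M,N,T'} (∂g/∂u^j_N)·S^N(P^{ji}_{T'})·S^{N+T'−M}(∂f/∂u^i_M)·λ^{N+T'−M}`. -/
noncomputable def B (P : Fin ℓ → Fin ℓ → (Fin D → ℤ) → A ℓ D)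
    (T : Fin D → ℤ) (f g : A ℓ D) : A ℓ D :=
  ∑ᶠ (i : Fin ℓ) (j : Fin ℓ) (M : Fin D → ℤ) (N : Fin D → ℤ),
    (pderiv (j, N) g) * (Sh N (P j i (T - N + M))) * (Sh T (pderiv (i, M) f))

/-- The family of generator coefficients has only finitely many nonzero members. -/
def FinSupp (P : Fin ℓ → Fin ℓ → (Fin D → ℤ) → A ℓ D) : Prop :=
  {x : (Fin ℓ × Fin ℓ) × (Fin D → ℤ) | P x.1.1 x.1.2 x.2 ≠ 0}.Finite

/-- The PVA-Jacobi identity for the triple `(f,g,h)`, written coefficient-wise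
(for all `T, U ∈ ℤ^D`, the coefficient of `λ^T μ^U` in
`Σ_U {f_λ B_U(g,h)}μ^U − Σ_T {g_μ B_T(f,h)}λ^T = Σ_{T,U} B_U(B_T(f,g),h)λ^{T+U}μ^U`). -/
def Jacobi (P : Fin ℓ → Fin ℓ → (Fin D → ℤ) → A ℓ D) (f g h : A ℓ D) : Prop :=
  ∀ T U : Fin D → ℤ,
    B P T f (B P U g h) - B P U g (B P T f h) = B P U (B P (T - U) f g) h

/-- For `D = 2`: the lattice point `(m,n) ∈ ℤ²`. -/
def v (m n : ℤ) : Fin 2 → ℤ := ![m, n]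

/-- For `D = 2`, `ℓ = 1`: the variable `u_{mn}` of the scalar two-dimensional algebra. -/
noncomputable def uu (m n : ℤ) : A 1 2 := X ((0 : Fin 1), v m n)


section Core

variable {D : ℕ}

noncomputable def dd (N : Fin D → ℤ) (p : A 1 D) : A 1 D := pderiv ((0 : Fin 1), N) p

lemma Sh_C (M : Fin D → ℤ) (x : ℂ) : Sh M (C x : A 1 D) = C x := by
  simp [Sh]

lemma Sh_Sh (M N : Fin D → ℤ) (p : A 1 D) : Sh M (Sh N p) = Sh (N + M) p := by
  simp only [Sh, renameEquiv_apply, rename_rename]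
  have h : (⇑((Equiv.refl (Fin 1)).prodCongr (Equiv.addRight M)) ∘
      ⇑((Equiv.refl (Fin 1)).prodCongr (Equiv.addRight N)))
      = ⇑((Equiv.refl (Fin 1)).prodCongr (Equiv.addRight (N + M))) := by
    funext x
    simp [Prod.map, add_assoc]
  rw [h]

lemma Sh_zero (p : A 1 D) : Sh 0 p = p := by
  simp only [Sh, renameEquiv_apply]
  rw [show ((Equiv.refl (Fin 1)).prodCongr (Equiv.addRight (0 : Fin D → ℤ)) : _ → _) = id by
    ext x : 1 <;> simp]
  simp [rename_id]

lemma Sh_eq_zero {M : Fin D → ℤ} {p : A 1 D} : Sh M p = 0 ↔ p = 0 :=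
  EmbeddingLike.map_eq_zero_iff

lemma dd_zero (N : Fin D → ℤ) : dd N (0 : A 1 D) = 0 := by simp [dd]

lemma dd_C_mul (N : Fin D → ℤ) (x : ℂ) (p : A 1 D) : dd N (C x * p) = C x * dd N p := by
  simp [dd, pderiv_C_mul]

lemma dd_mul (N : Fin D → ℤ) (p q : A 1 D) : dd N (p * q) = dd N p * q + p * dd N q := by
  simp only [dd, pderiv_mul]

lemma dd_Sh (N M : Fin D → ℤ) (p : A 1 D) : dd N (Sh M p) = Sh M (dd (N - M) p) := by
  have h := pderiv_rename (f := ((Equiv.refl (Fin 1)).prodCongr (Equiv.addRight M) : _ → _))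
    (Equiv.injective _) ((0 : Fin 1), N - M) p
  rw [show (((Equiv.refl (Fin 1)).prodCongr (Equiv.addRight M)) ((0 : Fin 1), N - M)) =
    ((0 : Fin 1), N) by simp] at h
  simpa [dd, Sh] using h

lemma pderiv_comm' {σ R : Type*} [CommSemiring R] [DecidableEq σ] (i j : σ) (p : MvPolynomial σ R) :
    pderiv i (pderiv j p) = pderiv j (pderiv i p) := by
  induction p using MvPolynomial.induction_on' with
  | monomial s a =>
    rcases eq_or_ne i j with rfl | h
    · rfl
    · simp only [pderiv_monomial]
      rw [tsub_right_comm]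
      congr 1
      rw [Finsupp.tsub_apply, Finsupp.tsub_apply, Finsupp.single_apply, Finsupp.single_apply,
        if_neg h, if_neg (Ne.symm h)]
      simp only [Nat.sub_zero]
      ring
  | add p q hp hq => simp [map_add, hp, hq]

lemma dd_comm (M N : Fin D → ℤ) (p : A 1 D) : dd M (dd N p) = dd N (dd M p) := by
  classical exact pderiv_comm' _ _ p

lemma dd_fin (p : A 1 D) : (Function.support fun N => dd N p).Finite := by
  have : (Function.support fun N => dd N p) ⊆ (fun N : Fin D → ℤ => ((0 : Fin 1), N)) ⁻¹' ↑p.vars := by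
    intro N hN
    simp only [Set.mem_preimage, Finset.coe_insert, Set.mem_setOf_eq]
    by_contra h
    exact hN (pderiv_eq_zero_of_notMem_vars h)
  exact Set.Finite.subset ((p.vars.finite_toSet).preimage
    (fun a _ b _ h => by simpa [Prod.ext_iff] using h)) this

lemma dd2_fin (p : A 1 D) : (Function.support fun z : (Fin D → ℤ) × (Fin D → ℤ) => dd z.1 (dd z.2 p)).Finite := by
  have h : (Function.support fun z : (Fin D → ℤ) × (Fin D → ℤ) => dd z.1 (dd z.2 p)) ⊆
      ⋃ b ∈ (Function.support fun N => dd N p), (fun N => (N, b)) '' (Function.support fun N => dd N (dd b p)) := by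
    rintro ⟨a, b⟩ hz
    have hb : dd b p ≠ 0 := fun h => hz (by simp [h, dd_zero])
    exact Set.mem_biUnion hb ⟨a, hz, rfl⟩
  exact Set.Finite.subset (Set.Finite.biUnion (dd_fin p) fun b _ =>
    (dd_fin (dd b p)).image _) h


variable (c : (Fin D → ℤ) → ℂ) (f : A 1 D)

/-- The master formula kernel for `P_K = c_K f S^K f`. -/
noncomputable def ker (T : Fin D → ℤ) (p q : A 1 D) (z : (Fin D → ℤ) × (Fin D → ℤ)) : A 1 D :=
  C (c (T - z.2 + z.1)) * (dd z.2 q * (Sh z.2 f * (Sh (T + z.1) f * Sh T (dd z.1 p))))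

noncomputable def Bc (T : Fin D → ℤ) (p q : A 1 D) : A 1 D := ∑ᶠ z, ker c f T p q z

lemma ker_fin (T : Fin D → ℤ) (p q : A 1 D) : (Function.support (ker c f T p q)).Finite := by
  apply Set.Finite.subset ((dd_fin p).prod (dd_fin q))
  rintro ⟨M, N⟩ hz
  refine ⟨?_, ?_⟩ <;> intro h <;> apply hz <;>
    simp [ker, h, dd_zero, Sh_eq_zero]

lemma B_eq (P : Fin 1 → Fin 1 → (Fin D → ℤ) → A 1 D)
    (hP : P = fun _ _ K => C (c K) * (f * Sh K f)) (T : Fin D → ℤ) (p q : A 1 D) :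
    B P T p q = Bc c f T p q := by
  subst hP
  rw [B, Bc, finsum_unique, finsum_unique, finsum_curry _ (ker_fin c f T p q)]
  apply finsum_congr; intro M
  apply finsum_congr; intro N
  simp only [map_mul, Sh_C, Sh_Sh, Fin.default_eq_zero]
  rw [show T - N + M + N = T + M by abel]
  show _ = C (c (T - N + M)) * (dd N q * (Sh N f * (Sh (T + M) f * Sh T (dd M p))))
  simp only [dd]
  ring

lemma dd_Sh_f (hf : ∀ N : Fin D → ℤ, N ≠ 0 → dd N f = 0) (N K : Fin D → ℤ) :
    dd N (Sh K f) = if N = K then Sh K (dd 0 f) else 0 := by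
  rw [dd_Sh]
  split_ifs with h
  · rw [h, sub_self]
  · rw [hf _ (sub_ne_zero_of_ne h), map_zero]

lemma skew (hc : ∀ K, c (-K) = - c K) (T : Fin D → ℤ) (p q : A 1 D) :
    Bc c f (-T) q p = - Sh (-T) (Bc c f T p q) := by
  rw [Bc, Bc, show (Sh (-T)) (∑ᶠ z, ker c f T p q z) = ∑ᶠ z, Sh (-T) (ker c f T p q z) by
      exact AddEquiv.map_finsum (Sh (-T)).toRingEquiv.toAddEquiv (ker c f T p q),
    ← finsum_neg_distrib, ← finsum_comp_equiv (Equiv.prodComm (Fin D → ℤ) (Fin D → ℤ))]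
  apply finsum_congr
  rintro ⟨M, N⟩
  show ker c f (-T) q p (N, M) = -((Sh (-T)) (ker c f T p q (M, N)))
  simp only [ker, map_mul, Sh_C, Sh_Sh]
  rw [show N + -T = -T + N by abel, show T + M + -T = M by abel, show T + -T = 0 by abel,
    Sh_zero, show -T - M + N = -(T - N + M) by abel, hc, map_neg]
  ring


section Families
variable (T U : Fin D → ℤ) (p q r : A 1 D)

noncomputable def F1 (y : ((Fin D → ℤ) × (Fin D → ℤ)) × ((Fin D → ℤ) × (Fin D → ℤ))) : A 1 D :=
  C (c (T - y.1.2 + y.1.1)) * (C (c (U - y.2.2 + y.2.1)) * (dd y.1.2 (dd y.2.2 r) *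
    (Sh y.2.2 f * (Sh (U + y.2.1) f * (Sh U (dd y.2.1 q) *
    (Sh y.1.2 f * (Sh (T + y.1.1) f * Sh T (dd y.1.1 p))))))))

noncomputable def F2 (y : ((Fin D → ℤ) × (Fin D → ℤ)) × ((Fin D → ℤ) × (Fin D → ℤ))) : A 1 D :=
  C (c (T - y.1.2 + y.1.1)) * (C (c (U - y.2.2 + y.2.1)) * (dd y.2.2 r *
    ((if y.1.2 = y.2.2 then Sh y.2.2 (dd 0 f) else 0) * (Sh (U + y.2.1) f * (Sh U (dd y.2.1 q) *
    (Sh y.1.2 f * (Sh (T + y.1.1) f * Sh T (dd y.1.1 p))))))))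

noncomputable def F3 (y : ((Fin D → ℤ) × (Fin D → ℤ)) × ((Fin D → ℤ) × (Fin D → ℤ))) : A 1 D :=
  C (c (T - y.1.2 + y.1.1)) * (C (c (U - y.2.2 + y.2.1)) * (dd y.2.2 r *
    (Sh y.2.2 f * ((if y.1.2 = U + y.2.1 then Sh (U + y.2.1) (dd 0 f) else 0) * (Sh U (dd y.2.1 q) *
    (Sh y.1.2 f * (Sh (T + y.1.1) f * Sh T (dd y.1.1 p))))))))

noncomputable def F4 (y : ((Fin D → ℤ) × (Fin D → ℤ)) × ((Fin D → ℤ) × (Fin D → ℤ))) : A 1 D :=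
  C (c (T - y.1.2 + y.1.1)) * (C (c (U - y.2.2 + y.2.1)) * (dd y.2.2 r *
    (Sh y.2.2 f * (Sh (U + y.2.1) f * (Sh U (dd (y.1.2 - U) (dd y.2.1 q)) *
    (Sh y.1.2 f * (Sh (T + y.1.1) f * Sh T (dd y.1.1 p))))))))

noncomputable def G2 (t : ((Fin D → ℤ) × (Fin D → ℤ)) × (Fin D → ℤ)) : A 1 D :=
  C (c (T - t.1.2 + t.1.1)) * (C (c (U - t.1.2 + t.2)) * (dd t.1.2 r *
    (Sh t.1.2 (dd 0 f) * (Sh (U + t.2) f * (Sh U (dd t.2 q) *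
    (Sh t.1.2 f * (Sh (T + t.1.1) f * Sh T (dd t.1.1 p))))))))

noncomputable def G3 (t : ((Fin D → ℤ) × (Fin D → ℤ)) × (Fin D → ℤ)) : A 1 D :=
  C (c (T - t.1.2 + t.1.1)) * (C (c (U - t.2 + (t.1.2 - U))) * (dd t.2 r *
    (Sh t.2 f * (Sh (U + (t.1.2 - U)) (dd 0 f) * (Sh U (dd (t.1.2 - U) q) *
    (Sh t.1.2 f * (Sh (T + t.1.1) f * Sh T (dd t.1.1 p))))))))

noncomputable def H1 (y : ((Fin D → ℤ) × (Fin D → ℤ)) × ((Fin D → ℤ) × (Fin D → ℤ))) : A 1 D :=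
  C (c (U - y.1.2 + y.1.1)) * (C (c (T - U - y.2.2 + y.2.1)) * (dd y.1.2 r *
    (Sh y.1.2 f * (Sh (U + y.1.1) f * (Sh U (dd y.1.1 (dd y.2.2 q)) *
    (Sh (y.2.2 + U) f * (Sh (T - U + y.2.1 + U) f * Sh (T - U + U) (dd y.2.1 p))))))))

noncomputable def H2 (y : ((Fin D → ℤ) × (Fin D → ℤ)) × ((Fin D → ℤ) × (Fin D → ℤ))) : A 1 D :=
  C (c (U - y.1.2 + y.1.1)) * (C (c (T - U - y.2.2 + y.2.1)) * (dd y.1.2 r *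
    (Sh y.1.2 f * (Sh (U + y.1.1) f * (Sh U (dd y.2.2 q) *
    ((if y.1.1 = y.2.2 then Sh (y.2.2 + U) (dd 0 f) else 0) *
      (Sh (T - U + y.2.1 + U) f * Sh (T - U + U) (dd y.2.1 p))))))))

noncomputable def H3 (y : ((Fin D → ℤ) × (Fin D → ℤ)) × ((Fin D → ℤ) × (Fin D → ℤ))) : A 1 D :=
  C (c (U - y.1.2 + y.1.1)) * (C (c (T - U - y.2.2 + y.2.1)) * (dd y.1.2 r *
    (Sh y.1.2 f * (Sh (U + y.1.1) f * (Sh U (dd y.2.2 q) *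
    (Sh (y.2.2 + U) f * ((if y.1.1 = T - U + y.2.1 then Sh (T - U + y.2.1 + U) (dd 0 f) else 0) *
      Sh (T - U + U) (dd y.2.1 p))))))))

noncomputable def H4 (y : ((Fin D → ℤ) × (Fin D → ℤ)) × ((Fin D → ℤ) × (Fin D → ℤ))) : A 1 D :=
  C (c (U - y.1.2 + y.1.1)) * (C (c (T - U - y.2.2 + y.2.1)) * (dd y.1.2 r *
    (Sh y.1.2 f * (Sh (U + y.1.1) f * (Sh U (dd y.2.2 q) *
    (Sh (y.2.2 + U) f * (Sh (T - U + y.2.1 + U) f *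
      Sh (T - U + U) (dd (y.1.1 - (T - U)) (dd y.2.1 p)))))))))

noncomputable def K2 (t : ((Fin D → ℤ) × (Fin D → ℤ)) × (Fin D → ℤ)) : A 1 D :=
  C (c (U - t.1.2 + t.1.1)) * (C (c (T - U - t.1.1 + t.2)) * (dd t.1.2 r *
    (Sh t.1.2 f * (Sh (U + t.1.1) f * (Sh U (dd t.1.1 q) *
    (Sh (t.1.1 + U) (dd 0 f) * (Sh (T - U + t.2 + U) f * Sh (T - U + U) (dd t.2 p))))))))

noncomputable def K3 (t : ((Fin D → ℤ) × (Fin D → ℤ)) × (Fin D → ℤ)) : A 1 D :=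
  C (c (U - t.1.2 + t.1.1)) * (C (c (T - U - t.2 + (t.1.1 - (T - U)))) * (dd t.1.2 r *
    (Sh t.1.2 f * (Sh (U + t.1.1) f * (Sh U (dd t.2 q) *
    (Sh (t.2 + U) f * (Sh (T - U + (t.1.1 - (T - U)) + U) (dd 0 f) *
      Sh (T - U + U) (dd (t.1.1 - (T - U)) p))))))))

lemma F1_fin : (Function.support (F1 c f T U p q r)).Finite := by
  apply Set.Finite.subset (Set.Finite.image
    (fun x : (Fin D → ℤ) × ((Fin D → ℤ) × ((Fin D → ℤ) × (Fin D → ℤ))) =>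
      ((x.1, x.2.2.1), (x.2.1, x.2.2.2)))
    ((dd_fin p).prod ((dd_fin q).prod (dd2_fin r))))
  rintro ⟨⟨M, N⟩, ⟨a, b⟩⟩ hy
  exact ⟨(M, (a, (N, b))),
    ⟨fun h => hy (by simp [F1, h]), fun h => hy (by simp [F1, h]),
     fun h => hy (by simp [F1, h])⟩, rfl⟩

lemma F2_fin : (Function.support (F2 c f T U p q r)).Finite := by
  apply Set.Finite.subset (Set.Finite.image
    (fun x : (Fin D → ℤ) × ((Fin D → ℤ) × (Fin D → ℤ)) =>
      ((x.1, x.2.2), (x.2.1, x.2.2)))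
    ((dd_fin p).prod ((dd_fin q).prod (dd_fin r))))
  rintro ⟨⟨M, N⟩, ⟨a, b⟩⟩ hy
  have hNb : N = b := by
    by_contra h
    exact hy (by simp [F2, if_neg h])
  subst hNb
  exact ⟨(M, (a, N)),
    ⟨fun h => hy (by simp [F2, h]), fun h => hy (by simp [F2, h]),
     fun h => hy (by simp [F2, h])⟩, rfl⟩

lemma F3_fin : (Function.support (F3 c f T U p q r)).Finite := by
  apply Set.Finite.subset (Set.Finite.image
    (fun x : (Fin D → ℤ) × ((Fin D → ℤ) × (Fin D → ℤ)) =>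
      ((x.1, U + x.2.1), (x.2.1, x.2.2)))
    ((dd_fin p).prod ((dd_fin q).prod (dd_fin r))))
  rintro ⟨⟨M, N⟩, ⟨a, b⟩⟩ hy
  have hNa : N = U + a := by
    by_contra h
    exact hy (by simp [F3, if_neg h])
  subst hNa
  exact ⟨(M, (a, b)),
    ⟨fun h => hy (by simp [F3, h]), fun h => hy (by simp [F3, h]),
     fun h => hy (by simp [F3, h])⟩, rfl⟩

lemma F4_fin : (Function.support (F4 c f T U p q r)).Finite := by
  apply Set.Finite.subset (Set.Finite.image
    (fun x : (Fin D → ℤ) × ((Fin D → ℤ) × ((Fin D → ℤ) × (Fin D → ℤ))) =>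
      ((x.1, x.2.2.1 + U), (x.2.2.2, x.2.1)))
    ((dd_fin p).prod ((dd_fin r).prod (dd2_fin q))))
  rintro ⟨⟨M, N⟩, ⟨a, b⟩⟩ hy
  exact ⟨(M, (b, ((N - U), a))),
    ⟨fun h => hy (by simp [F4, h]), fun h => hy (by simp [F4, h]),
     fun h => hy (by simp [F4, h])⟩, by simp⟩

lemma G2_fin : (Function.support (G2 c f T U p q r)).Finite := by
  apply Set.Finite.subset (Set.Finite.image
    (fun x : (Fin D → ℤ) × ((Fin D → ℤ) × (Fin D → ℤ)) =>
      ((x.1, x.2.2), x.2.1))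
    ((dd_fin p).prod ((dd_fin q).prod (dd_fin r))))
  rintro ⟨⟨M, N⟩, a⟩ hy
  exact ⟨(M, (a, N)),
    ⟨fun h => hy (by simp [G2, h]), fun h => hy (by simp [G2, h]),
     fun h => hy (by simp [G2, h])⟩, rfl⟩

lemma G3_fin : (Function.support (G3 c f T U p q r)).Finite := by
  apply Set.Finite.subset (Set.Finite.image
    (fun x : (Fin D → ℤ) × ((Fin D → ℤ) × (Fin D → ℤ)) =>
      ((x.1, x.2.1 + U), x.2.2))
    ((dd_fin p).prod ((dd_fin q).prod (dd_fin r))))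
  rintro ⟨⟨M, N⟩, b⟩ hy
  exact ⟨(M, ((N - U), b)),
    ⟨fun h => hy (by simp [G3, h]), fun h => hy (by simp [G3, h]),
     fun h => hy (by simp [G3, h])⟩, by simp⟩

lemma H1_fin : (Function.support (H1 c f T U p q r)).Finite := by
  apply Set.Finite.subset (Set.Finite.image
    (fun x : (Fin D → ℤ) × ((Fin D → ℤ) × ((Fin D → ℤ) × (Fin D → ℤ))) =>
      ((x.2.2.1, x.2.1), (x.1, x.2.2.2)))
    ((dd_fin p).prod ((dd_fin r).prod (dd2_fin q))))
  rintro ⟨⟨M, N⟩, ⟨a, b⟩⟩ hy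
  exact ⟨(a, (N, (M, b))),
    ⟨fun h => hy (by simp [H1, h]), fun h => hy (by simp [H1, h]),
     fun h => hy (by simp [H1, h])⟩, rfl⟩

lemma H2_fin : (Function.support (H2 c f T U p q r)).Finite := by
  apply Set.Finite.subset (Set.Finite.image
    (fun x : (Fin D → ℤ) × ((Fin D → ℤ) × (Fin D → ℤ)) =>
      ((x.2.2, x.2.1), (x.1, x.2.2)))
    ((dd_fin p).prod ((dd_fin r).prod (dd_fin q))))
  rintro ⟨⟨M, N⟩, ⟨a, b⟩⟩ hy
  have hMb : M = b := by
    by_contra h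
    exact hy (by simp [H2, if_neg h])
  subst hMb
  exact ⟨(a, (N, M)),
    ⟨fun h => hy (by simp [H2, h]), fun h => hy (by simp [H2, h]),
     fun h => hy (by simp [H2, h])⟩, rfl⟩

lemma H3_fin : (Function.support (H3 c f T U p q r)).Finite := by
  apply Set.Finite.subset (Set.Finite.image
    (fun x : (Fin D → ℤ) × ((Fin D → ℤ) × (Fin D → ℤ)) =>
      ((T - U + x.1, x.2.1), (x.1, x.2.2)))
    ((dd_fin p).prod ((dd_fin r).prod (dd_fin q))))
  rintro ⟨⟨M, N⟩, ⟨a, b⟩⟩ hy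
  have hMa : M = T - U + a := by
    by_contra h
    exact hy (by simp [H3, if_neg h])
  subst hMa
  exact ⟨(a, (N, b)),
    ⟨fun h => hy (by simp [H3, h]), fun h => hy (by simp [H3, h]),
     fun h => hy (by simp [H3, h])⟩, rfl⟩

lemma H4_fin : (Function.support (H4 c f T U p q r)).Finite := by
  apply Set.Finite.subset (Set.Finite.image
    (fun x : ((Fin D → ℤ) × (Fin D → ℤ)) × ((Fin D → ℤ) × (Fin D → ℤ)) =>
      ((x.1.1 + (T - U), x.2.1), (x.1.2, x.2.2)))
    ((dd2_fin p).prod ((dd_fin r).prod (dd_fin q))))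
  rintro ⟨⟨M, N⟩, ⟨a, b⟩⟩ hy
  exact ⟨((M - (T - U), a), (N, b)),
    ⟨fun h => hy (by simp [H4, h]), fun h => hy (by simp [H4, h]),
     fun h => hy (by simp [H4, h])⟩, by simp⟩

lemma K2_fin : (Function.support (K2 c f T U p q r)).Finite := by
  apply Set.Finite.subset (Set.Finite.image
    (fun x : (Fin D → ℤ) × ((Fin D → ℤ) × (Fin D → ℤ)) =>
      ((x.2.1, x.2.2), x.1))
    ((dd_fin p).prod ((dd_fin q).prod (dd_fin r))))
  rintro ⟨⟨M, N⟩, a⟩ hy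
  exact ⟨(a, (M, N)),
    ⟨fun h => hy (by simp [K2, h]), fun h => hy (by simp [K2, h]),
     fun h => hy (by simp [K2, h])⟩, rfl⟩

lemma K3_fin : (Function.support (K3 c f T U p q r)).Finite := by
  apply Set.Finite.subset (Set.Finite.image
    (fun x : (Fin D → ℤ) × ((Fin D → ℤ) × (Fin D → ℤ)) =>
      ((x.1 + (T - U), x.2.2), x.2.1))
    ((dd_fin p).prod ((dd_fin q).prod (dd_fin r))))
  rintro ⟨⟨M, N⟩, b⟩ hy
  exact ⟨((M - (T - U)), (b, N)),
    ⟨fun h => hy (by simp [K3, h]), fun h => hy (by simp [K3, h]),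
     fun h => hy (by simp [K3, h])⟩, by simp⟩

end Families


section Expansion

lemma supp_add_fin {α : Type*} {F G : α → A 1 D} (hF : (Function.support F).Finite)
    (hG : (Function.support G).Finite) : (Function.support fun y => F y + G y).Finite :=
  (hF.union hG).subset (Function.support_add F G)

lemma slice_fin {α β : Type*} {F : α × β → A 1 D} (h : (Function.support F).Finite) (w : α) :
    (Function.support fun z => F (w, z)).Finite := by
  have : (Function.support fun z => F (w, z)) = (fun z : β => (w, z)) ⁻¹' Function.support F := rfl
  rw [this]
  exact h.preimage (Set.injOn_of_injective (fun z1 z2 hz => by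
    simpa [Prod.ext_iff] using hz))

variable (T U : Fin D → ℤ) (p q r : A 1 D)

lemma collapse2 : ∑ᶠ y, F2 c f T U p q r y = ∑ᶠ t, G2 c f T U p q r t := by
  rw [finsum_curry _ (F2_fin c f T U p q r), finsum_curry _ (G2_fin c f T U p q r)]
  apply finsum_congr; intro w
  rw [finsum_curry _ (slice_fin (F2_fin c f T U p q r) w)]
  apply finsum_congr; intro a
  rw [finsum_eq_single _ w.2 (fun b hb => by
    simp only [F2]
    rw [if_neg (fun h => hb h.symm)]
    ring)]
  simp only [F2, G2, if_true]

lemma collapse3 : ∑ᶠ y, F3 c f T U p q r y = ∑ᶠ t, G3 c f T U p q r t := by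
  rw [finsum_curry _ (F3_fin c f T U p q r), finsum_curry _ (G3_fin c f T U p q r)]
  apply finsum_congr; intro w
  rw [finsum_curry _ (slice_fin (F3_fin c f T U p q r) w)]
  rw [finsum_eq_single _ (w.2 - U) (fun a ha => by
    apply finsum_eq_zero_of_forall_eq_zero
    intro b
    have : ¬ (w.2 = U + a) := fun h => ha (by rw [h]; abel)
    simp only [F3]
    rw [if_neg this]
    ring)]
  apply finsum_congr; intro b
  simp only [F3, G3]
  rw [if_pos (show w.2 = U + (w.2 - U) by abel)]

lemma EXP1 (hf : ∀ N : Fin D → ℤ, N ≠ 0 → dd N f = 0) :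
    Bc c f T p (Bc c f U q r) =
      (∑ᶠ y, F1 c f T U p q r y) + (∑ᶠ t, G2 c f T U p q r t) +
      (∑ᶠ t, G3 c f T U p q r t) + (∑ᶠ y, F4 c f T U p q r y) := by
  have hker : ∀ w, ker c f T p (Bc c f U q r) w
      = ∑ᶠ z, (F1 c f T U p q r (w, z) + F2 c f T U p q r (w, z) + F3 c f T U p q r (w, z) +
          F4 c f T U p q r (w, z)) := by
    intro w
    have h1 : dd w.2 (Bc c f U q r) = ∑ᶠ z, dd w.2 (ker c f U q r z) := by
      rw [Bc]
      exact AddMonoidHom.map_finsum ((pderiv ((0 : Fin 1), w.2)).toLinearMap.toAddMonoidHom)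
        (ker_fin c f U q r)
    have h2 : (Function.support fun z => dd w.2 (ker c f U q r z)).Finite :=
      (ker_fin c f U q r).subset (fun z hz hz0 => hz (show dd w.2 (ker c f U q r z) = 0 by
        rw [hz0, dd_zero]))
    have h3 : (Function.support fun z => dd w.2 (ker c f U q r z) *
        (Sh w.2 f * (Sh (T + w.1) f * Sh T (dd w.1 p)))).Finite :=
      h2.subset (fun z hz hz0 => hz (show dd w.2 (ker c f U q r z) *
        (Sh w.2 f * (Sh (T + w.1) f * Sh T (dd w.1 p))) = 0 by
        have : dd w.2 (ker c f U q r z) = 0 := hz0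
        rw [this, zero_mul]))
    rw [ker, h1, finsum_mul _ _, mul_finsum _ _]
    apply finsum_congr
    rintro ⟨a, b⟩
    obtain ⟨M, N⟩ := w
    rw [show ker c f U q r (a, b)
        = C (c (U - b + a)) * (dd b r * (Sh b f * (Sh (U + a) f * Sh U (dd a q)))) from rfl]
    rw [dd_C_mul, dd_mul, dd_mul, dd_mul, dd_Sh_f f hf, dd_Sh_f f hf, dd_Sh]
    simp only [F1, F2, F3, F4]
    ring
  have hfin : (Function.support fun y : ((Fin D → ℤ) × (Fin D → ℤ)) × ((Fin D → ℤ) × (Fin D → ℤ))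
      => F1 c f T U p q r y + F2 c f T U p q r y + F3 c f T U p q r y + F4 c f T U p q r y).Finite :=
    supp_add_fin (supp_add_fin (supp_add_fin (F1_fin c f T U p q r) (F2_fin c f T U p q r))
      (F3_fin c f T U p q r)) (F4_fin c f T U p q r)
  calc Bc c f T p (Bc c f U q r)
      = ∑ᶠ w, ker c f T p (Bc c f U q r) w := rfl
    _ = ∑ᶠ w, ∑ᶠ z, (F1 c f T U p q r (w, z) + F2 c f T U p q r (w, z) + F3 c f T U p q r (w, z) +
          F4 c f T U p q r (w, z)) := finsum_congr hker
    _ = ∑ᶠ y, (F1 c f T U p q r y + F2 c f T U p q r y + F3 c f T U p q r y +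
          F4 c f T U p q r y) := (finsum_curry _ hfin).symm
    _ = (∑ᶠ y, F1 c f T U p q r y) + (∑ᶠ y, F2 c f T U p q r y) +
          (∑ᶠ y, F3 c f T U p q r y) + (∑ᶠ y, F4 c f T U p q r y) := by
        rw [finsum_add_distrib (supp_add_fin (supp_add_fin (F1_fin c f T U p q r)
            (F2_fin c f T U p q r)) (F3_fin c f T U p q r)) (F4_fin c f T U p q r),
          finsum_add_distrib (supp_add_fin (F1_fin c f T U p q r) (F2_fin c f T U p q r))
            (F3_fin c f T U p q r),
          finsum_add_distrib (F1_fin c f T U p q r) (F2_fin c f T U p q r)]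
    _ = _ := by rw [collapse2, collapse3]

lemma collapseH2 : ∑ᶠ y, H2 c f T U p q r y = ∑ᶠ t, K2 c f T U p q r t := by
  rw [finsum_curry _ (H2_fin c f T U p q r), finsum_curry _ (K2_fin c f T U p q r)]
  apply finsum_congr; intro w
  rw [finsum_curry _ (slice_fin (H2_fin c f T U p q r) w)]
  apply finsum_congr; intro a
  rw [finsum_eq_single _ w.1 (fun b hb => by
    simp only [H2]
    rw [if_neg (fun h => hb h.symm)]
    ring)]
  simp only [H2, K2, if_true]

lemma collapseH3 : ∑ᶠ y, H3 c f T U p q r y = ∑ᶠ t, K3 c f T U p q r t := by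
  rw [finsum_curry _ (H3_fin c f T U p q r), finsum_curry _ (K3_fin c f T U p q r)]
  apply finsum_congr; intro w
  rw [finsum_curry _ (slice_fin (H3_fin c f T U p q r) w)]
  rw [finsum_eq_single _ (w.1 - (T - U)) (fun a ha => by
    apply finsum_eq_zero_of_forall_eq_zero
    intro b
    have : ¬ (w.1 = T - U + a) := fun h => ha (by rw [h]; abel)
    simp only [H3]
    rw [if_neg this]
    ring)]
  apply finsum_congr; intro b
  simp only [H3, K3]
  rw [if_pos (show w.1 = T - U + (w.1 - (T - U)) by abel)]

lemma EXP2 (hf : ∀ N : Fin D → ℤ, N ≠ 0 → dd N f = 0) :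
    Bc c f U (Bc c f (T - U) p q) r =
      (∑ᶠ y, H1 c f T U p q r y) + (∑ᶠ t, K2 c f T U p q r t) +
      (∑ᶠ t, K3 c f T U p q r t) + (∑ᶠ y, H4 c f T U p q r y) := by
  have hker : ∀ w, ker c f U (Bc c f (T - U) p q) r w
      = ∑ᶠ z, (H1 c f T U p q r (w, z) + H2 c f T U p q r (w, z) + H3 c f T U p q r (w, z) +
          H4 c f T U p q r (w, z)) := by
    intro w
    have h1 : dd w.1 (Bc c f (T - U) p q) = ∑ᶠ z, dd w.1 (ker c f (T - U) p q z) := by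
      rw [Bc]
      exact AddMonoidHom.map_finsum ((pderiv ((0 : Fin 1), w.1)).toLinearMap.toAddMonoidHom)
        (ker_fin c f (T - U) p q)
    have h2 : Sh U (dd w.1 (Bc c f (T - U) p q)) = ∑ᶠ z, Sh U (dd w.1 (ker c f (T - U) p q z)) := by
      rw [h1]
      exact AddEquiv.map_finsum (Sh U).toRingEquiv.toAddEquiv _
    have hz00 : ∀ z, ker c f (T - U) p q z = 0 → Sh U (dd w.1 (ker c f (T - U) p q z)) = 0 := by
      intro z hz0
      rw [hz0, dd_zero, map_zero]
    have hs3 : ∀ (u2 u3 u4 : A 1 D), (Function.support fun z =>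
        u2 * (u3 * (u4 * Sh U (dd w.1 (ker c f (T - U) p q z))))).Finite := by
      intro u2 u3 u4
      apply (ker_fin c f (T - U) p q).subset
      intro z hz hz0
      exact hz (show u2 * (u3 * (u4 * Sh U (dd w.1 (ker c f (T - U) p q z)))) = 0 by
        rw [hz00 z hz0, mul_zero, mul_zero, mul_zero])
    have hs2 : ∀ (u3 u4 : A 1 D), (Function.support fun z =>
        u3 * (u4 * Sh U (dd w.1 (ker c f (T - U) p q z)))).Finite := by
      intro u3 u4
      apply (ker_fin c f (T - U) p q).subset
      intro z hz hz0
      exact hz (show u3 * (u4 * Sh U (dd w.1 (ker c f (T - U) p q z))) = 0 by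
        rw [hz00 z hz0, mul_zero, mul_zero])
    have hs1 : ∀ (u4 : A 1 D), (Function.support fun z =>
        u4 * Sh U (dd w.1 (ker c f (T - U) p q z))).Finite := by
      intro u4
      apply (ker_fin c f (T - U) p q).subset
      intro z hz hz0
      exact hz (show u4 * Sh U (dd w.1 (ker c f (T - U) p q z)) = 0 by
        rw [hz00 z hz0, mul_zero])
    have h0 : (Function.support fun z => Sh U (dd w.1 (ker c f (T - U) p q z))).Finite := by
      apply (ker_fin c f (T - U) p q).subset
      intro z hz hz0
      exact hz (hz00 z hz0)
    rw [ker, h2, mul_finsum _ _, mul_finsum _ _, mul_finsum _ _,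
      mul_finsum _ _]
    apply finsum_congr
    rintro ⟨a, b⟩
    obtain ⟨M, N⟩ := w
    rw [show ker c f (T - U) p q (a, b)
        = C (c (T - U - b + a)) * (dd b q * (Sh b f * (Sh (T - U + a) f * Sh (T - U) (dd a p))))
        from rfl]
    rw [dd_C_mul, dd_mul, dd_mul, dd_mul, dd_Sh_f f hf, dd_Sh_f f hf, dd_Sh]
    simp only [map_add, map_mul, Sh_C, Sh_Sh, apply_ite (⇑(Sh U)), map_zero]
    simp only [H1, H2, H3, H4]
    ring
  have hfin : (Function.support fun y : ((Fin D → ℤ) × (Fin D → ℤ)) × ((Fin D → ℤ) × (Fin D → ℤ))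
      => H1 c f T U p q r y + H2 c f T U p q r y + H3 c f T U p q r y + H4 c f T U p q r y).Finite :=
    supp_add_fin (supp_add_fin (supp_add_fin (H1_fin c f T U p q r) (H2_fin c f T U p q r))
      (H3_fin c f T U p q r)) (H4_fin c f T U p q r)
  calc Bc c f U (Bc c f (T - U) p q) r
      = ∑ᶠ w, ker c f U (Bc c f (T - U) p q) r w := rfl
    _ = ∑ᶠ w, ∑ᶠ z, (H1 c f T U p q r (w, z) + H2 c f T U p q r (w, z) + H3 c f T U p q r (w, z) +
          H4 c f T U p q r (w, z)) := finsum_congr hker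
    _ = ∑ᶠ y, (H1 c f T U p q r y + H2 c f T U p q r y + H3 c f T U p q r y +
          H4 c f T U p q r y) := (finsum_curry _ hfin).symm
    _ = (∑ᶠ y, H1 c f T U p q r y) + (∑ᶠ y, H2 c f T U p q r y) +
          (∑ᶠ y, H3 c f T U p q r y) + (∑ᶠ y, H4 c f T U p q r y) := by
        rw [finsum_add_distrib (supp_add_fin (supp_add_fin (H1_fin c f T U p q r)
            (H2_fin c f T U p q r)) (H3_fin c f T U p q r)) (H4_fin c f T U p q r),
          finsum_add_distrib (supp_add_fin (H1_fin c f T U p q r) (H2_fin c f T U p q r))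
            (H3_fin c f T U p q r),
          finsum_add_distrib (H1_fin c f T U p q r) (H2_fin c f T U p q r)]
    _ = _ := by rw [collapseH2, collapseH3]

end Expansion


section Matching
variable (T U : Fin D → ℤ) (p q r : A 1 D)

lemma M1 : ∑ᶠ y, F1 c f T U p q r y = ∑ᶠ y, F1 c f U T q p r y := by
  rw [← finsum_comp_equiv (Equiv.prodComm ((Fin D → ℤ) × (Fin D → ℤ)) ((Fin D → ℤ) × (Fin D → ℤ)))
    (f := F1 c f U T q p r)]
  apply finsum_congr
  rintro ⟨⟨M, N⟩, ⟨a, b⟩⟩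
  simp only [Equiv.prodComm_apply, Prod.swap_prod_mk]
  simp only [F1]
  rw [dd_comm N b r]
  ring

lemma M2 : ∑ᶠ t, G2 c f T U p q r t = ∑ᶠ t, G2 c f U T q p r t := by
  rw [← finsum_comp_equiv (Equiv.mk
      (fun t : ((Fin D → ℤ) × (Fin D → ℤ)) × (Fin D → ℤ) => ((t.2, t.1.2), t.1.1))
      (fun t => ((t.2, t.1.2), t.1.1)) (fun ⟨⟨M, N⟩, a⟩ => rfl) (fun ⟨⟨M, N⟩, a⟩ => rfl))
    (f := G2 c f U T q p r)]
  apply finsum_congr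
  rintro ⟨⟨M, N⟩, a⟩
  simp only [Equiv.coe_fn_mk, G2]
  ring

lemma M3 : ∑ᶠ t, K2 c f T U p q r t = ∑ᶠ t, G3 c f T U p q r t := by
  rw [← finsum_comp_equiv (Equiv.mk
      (fun t : ((Fin D → ℤ) × (Fin D → ℤ)) × (Fin D → ℤ) => ((t.2, t.1.1 + U), t.1.2))
      (fun t => ((t.1.2 - U, t.2), t.1.1))
      (fun ⟨⟨M, N⟩, a⟩ => by simp) (fun ⟨⟨M, N⟩, a⟩ => by simp))
    (f := G3 c f T U p q r)]
  apply finsum_congr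
  rintro ⟨⟨M, N⟩, a⟩
  simp only [Equiv.coe_fn_mk, K2, G3]
  rw [show M + U - U = M by abel]
  rw [show U + M = M + U by abel]
  rw [show T - (M + U) + a = T - U - M + a by abel]
  rw [show T - U + a + U = T + a by abel]
  rw [show T - U + U = T by abel]
  ring

lemma M4 : ∑ᶠ y, H1 c f T U p q r y = ∑ᶠ y, F4 c f T U p q r y := by
  rw [← finsum_comp_equiv (Equiv.mk
      (fun y : ((Fin D → ℤ) × (Fin D → ℤ)) × ((Fin D → ℤ) × (Fin D → ℤ)) =>
        ((y.2.1, y.2.2 + U), (y.1.1, y.1.2)))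
      (fun y => ((y.2.1, y.2.2), (y.1.1, y.1.2 - U)))
      (fun ⟨⟨M, N⟩, ⟨a, b⟩⟩ => by simp) (fun ⟨⟨M, N⟩, ⟨a, b⟩⟩ => by simp))
    (f := F4 c f T U p q r)]
  apply finsum_congr
  rintro ⟨⟨M, N⟩, ⟨a, b⟩⟩
  simp only [Equiv.coe_fn_mk, H1, F4]
  rw [show b + U - U = b by abel]
  rw [dd_comm M b q]
  rw [show T - (b + U) + a = T - U - b + a by abel]
  rw [show T - U + a + U = T + a by abel]
  rw [show T - U + U = T by abel]
  ring

lemma M5 (hc : ∀ K, c (-K) = - c K) :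
    ∑ᶠ t, K3 c f T U p q r t = -∑ᶠ t, G3 c f U T q p r t := by
  rw [← finsum_neg_distrib]
  rw [← finsum_comp_equiv (Equiv.mk
      (fun t : ((Fin D → ℤ) × (Fin D → ℤ)) × (Fin D → ℤ) => ((t.2, t.1.1 + U), t.1.2))
      (fun t => ((t.1.2 - U, t.2), t.1.1))
      (fun ⟨⟨M, N⟩, a⟩ => by simp) (fun ⟨⟨M, N⟩, a⟩ => by simp))
    (f := fun t => -G3 c f U T q p r t)]
  apply finsum_congr
  rintro ⟨⟨M, N⟩, b⟩
  simp only [Equiv.coe_fn_mk, K3, G3]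
  rw [show U - (M + U) + b = -(T - U - b + (M - (T - U))) by abel, hc, map_neg]
  rw [show T - N + (M + U - T) = U - N + M by abel]
  rw [show T + (M + U - T) = T - U + (M - (T - U)) + U by abel]
  rw [show M + U - T = M - (T - U) by abel]
  rw [show M + U = U + M by abel]
  rw [show U + b = b + U by abel]
  rw [show T - U + U = T by abel]
  ring

lemma M6 (hc : ∀ K, c (-K) = - c K) :
    ∑ᶠ y, H4 c f T U p q r y = -∑ᶠ y, F4 c f U T q p r y := by
  rw [← finsum_neg_distrib]
  rw [← finsum_comp_equiv (Equiv.mk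
      (fun y : ((Fin D → ℤ) × (Fin D → ℤ)) × ((Fin D → ℤ) × (Fin D → ℤ)) =>
        ((y.2.2, y.2.1 + T), (y.1.1 - (T - U), y.1.2)))
      (fun y => ((y.2.1 + (T - U), y.2.2), (y.1.2 - T, y.1.1)))
      (fun ⟨⟨M, N⟩, ⟨a, b⟩⟩ => by simp) (fun ⟨⟨M, N⟩, ⟨a, b⟩⟩ => by simp))
    (f := fun y => -F4 c f U T q p r y)]
  apply finsum_congr
  rintro ⟨⟨M, N⟩, ⟨a, b⟩⟩
  simp only [Equiv.coe_fn_mk, K3, H4, F4]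
  rw [show U - (a + T) + b = -(T - U - b + a) by abel, hc, map_neg]
  rw [show T - N + (M - (T - U)) = U - N + M by abel]
  rw [show T + (M - (T - U)) = U + M by abel]
  rw [show a + T - T = a by abel]
  rw [dd_comm (M - (T - U)) a p]
  rw [show T - U + a + U = a + T by abel]
  rw [show U + b = b + U by abel]
  rw [show T - U + U = T by abel]
  ring

lemma jacobi_core (hf : ∀ N : Fin D → ℤ, N ≠ 0 → dd N f = 0) (hc : ∀ K, c (-K) = - c K) :
    Bc c f T p (Bc c f U q r) - Bc c f U q (Bc c f T p r) = Bc c f U (Bc c f (T - U) p q) r := by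
  rw [EXP1 c f T U p q r hf, EXP1 c f U T q p r hf, EXP2 c f T U p q r hf,
    M3 c f T U p q r, M4 c f T U p q r, M5 c f T U p q r hc, M6 c f T U p q r hc,
    M1 c f T U p q r, M2 c f T U p q r]
  abel

end Matching


end Core


/-- The antisymmetric coefficient function of the operator (on components). -/
noncomputable def cfa (α β γ δ ε : ℂ) (x y : ℤ) : ℂ :=
  if x = 2 ∧ y = 0 then α
  else if x = 1 ∧ y = 1 then β
  else if x = 0 ∧ y = 2 then γ
  else if x = 1 ∧ y = 0 then δ
  else if x = 0 ∧ y = 1 then ε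
  else if x = -2 ∧ y = 0 then -α
  else if x = -1 ∧ y = -1 then -β
  else if x = 0 ∧ y = -2 then -γ
  else if x = -1 ∧ y = 0 then -δ
  else if x = 0 ∧ y = -1 then -ε
  else 0

/-- The antisymmetric coefficient function of the operator. -/
noncomputable def cf (α β γ δ ε : ℂ) (K : Fin 2 → ℤ) : ℂ := cfa α β γ δ ε (K 0) (K 1)

lemma cfa_neg (α β γ δ ε : ℂ) (x y : ℤ) :
    cfa α β γ δ ε (-x) (-y) = - cfa α β γ δ ε x y := by
  by_cases h1 : x = 2 ∧ y = 0
  · obtain ⟨rfl, rfl⟩ := h1; norm_num [cfa]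
  by_cases h2 : x = 1 ∧ y = 1
  · obtain ⟨rfl, rfl⟩ := h2; norm_num [cfa]
  by_cases h3 : x = 0 ∧ y = 2
  · obtain ⟨rfl, rfl⟩ := h3; norm_num [cfa]
  by_cases h4 : x = 1 ∧ y = 0
  · obtain ⟨rfl, rfl⟩ := h4; norm_num [cfa]
  by_cases h5 : x = 0 ∧ y = 1
  · obtain ⟨rfl, rfl⟩ := h5; norm_num [cfa]
  by_cases h6 : x = -2 ∧ y = 0
  · obtain ⟨rfl, rfl⟩ := h6; norm_num [cfa]
  by_cases h7 : x = -1 ∧ y = -1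
  · obtain ⟨rfl, rfl⟩ := h7; norm_num [cfa]
  by_cases h8 : x = 0 ∧ y = -2
  · obtain ⟨rfl, rfl⟩ := h8; norm_num [cfa]
  by_cases h9 : x = -1 ∧ y = 0
  · obtain ⟨rfl, rfl⟩ := h9; norm_num [cfa]
  by_cases h10 : x = 0 ∧ y = -1
  · obtain ⟨rfl, rfl⟩ := h10; norm_num [cfa]
  rw [cfa, cfa, if_neg (by omega), if_neg (by omega), if_neg (by omega), if_neg (by omega),
    if_neg (by omega), if_neg (by omega), if_neg (by omega), if_neg (by omega),
    if_neg (by omega), if_neg (by omega), if_neg h1, if_neg h2, if_neg h3, if_neg h4,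
    if_neg h5, if_neg h6, if_neg h7, if_neg h8, if_neg h9, if_neg h10]
  ring

lemma cf_neg (α β γ δ ε : ℂ) : ∀ K, cf α β γ δ ε (-K) = - cf α β γ δ ε K := by
  intro K
  show cfa α β γ δ ε ((-K) 0) ((-K) 1) = - cfa α β γ δ ε (K 0) (K 1)
  have e0 : (-K) 0 = -(K 0) := rfl
  have e1 : (-K) 1 = -(K 1) := rfl
  rw [e0, e1, cfa_neg]

/-- for `f = f(u)` and constants `α, β, γ, δ, ε ∈ ℂ`, the operator
`P = f(u)(α S₁² + β S₁S₂ + γ S₂² + δ S₁ + ε S₂ − α S₁^{−2} − β S₁^{−1}S₂^{−1} − γ S₂^{−2}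
− δ S₁^{−1} − ε S₂^{−1})∘f(u)` is Hamiltonian: its master-formula λ-bracket is
skewsymmetric and satisfies the PVA-Jacobi identity for all triples. -/
theorem second_order_general_is_hamiltonian (f : A 1 2)
    (hfdep : ∀ N : Fin 2 → ℤ, N ≠ 0 → pderiv ((0 : Fin 1), N) f = 0)
    (α β γ δ ε : ℂ)
    (P : Fin 1 → Fin 1 → (Fin 2 → ℤ) → A 1 2)
    (hP : P = fun _ _ T =>
      if T = v 2 0 then C α * (f * Sh (v 2 0) f)
      else if T = v 1 1 then C β * (f * Sh (v 1 1) f)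
      else if T = v 0 2 then C γ * (f * Sh (v 0 2) f)
      else if T = v 1 0 then C δ * (f * Sh (v 1 0) f)
      else if T = v 0 1 then C ε * (f * Sh (v 0 1) f)
      else if T = v (-2) 0 then -(C α * (f * Sh (v (-2) 0) f))
      else if T = v (-1) (-1) then -(C β * (f * Sh (v (-1) (-1)) f))
      else if T = v 0 (-2) then -(C γ * (f * Sh (v 0 (-2)) f))
      else if T = v (-1) 0 then -(C δ * (f * Sh (v (-1) 0) f))
      else if T = v 0 (-1) then -(C ε * (f * Sh (v 0 (-1)) f))
      else 0) :
    (∀ (p q : A 1 2) (T : Fin 2 → ℤ), B P (-T) q p = - Sh (-T) (B P T p q)) ∧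
    (∀ p q r : A 1 2, Jacobi P p q r) := by
  have hf' : ∀ N : Fin 2 → ℤ, N ≠ 0 → dd N f = 0 := hfdep
  have hcc := cf_neg α β γ δ ε
  have hPc : P = fun _ _ K => C (cf α β γ δ ε K) * (f * Sh K f) := by
    rw [hP]
    funext i j K
    have hv : ∀ (a b : ℤ), K = v a b ↔ K 0 = a ∧ K 1 = b := by
      intro a b
      constructor
      · rintro rfl
        constructor <;> simp [v]
      · rintro ⟨hx, hy⟩
        funext i
        fin_cases i
        · simpa [v] using hx
        · simpa [v] using hy
    by_cases h1 : K = v 2 0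
    · subst h1; rw [if_pos rfl, show cf α β γ δ ε (v 2 0) = α from by norm_num [cf, cfa, v]]
    rw [if_neg h1]
    by_cases h2 : K = v 1 1
    · subst h2; rw [if_pos rfl, show cf α β γ δ ε (v 1 1) = β from by norm_num [cf, cfa, v]]
    rw [if_neg h2]
    by_cases h3 : K = v 0 2
    · subst h3; rw [if_pos rfl, show cf α β γ δ ε (v 0 2) = γ from by norm_num [cf, cfa, v]]
    rw [if_neg h3]
    by_cases h4 : K = v 1 0
    · subst h4; rw [if_pos rfl, show cf α β γ δ ε (v 1 0) = δ from by norm_num [cf, cfa, v]]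
    rw [if_neg h4]
    by_cases h5 : K = v 0 1
    · subst h5; rw [if_pos rfl, show cf α β γ δ ε (v 0 1) = ε from by norm_num [cf, cfa, v]]
    rw [if_neg h5]
    by_cases h6 : K = v (-2) 0
    · subst h6
      rw [if_pos rfl, show cf α β γ δ ε (v (-2) 0) = -α from by norm_num [cf, cfa, v], map_neg]
      ring
    rw [if_neg h6]
    by_cases h7 : K = v (-1) (-1)
    · subst h7
      rw [if_pos rfl, show cf α β γ δ ε (v (-1) (-1)) = -β from by norm_num [cf, cfa, v], map_neg]
      ring
    rw [if_neg h7]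
    by_cases h8 : K = v 0 (-2)
    · subst h8
      rw [if_pos rfl, show cf α β γ δ ε (v 0 (-2)) = -γ from by norm_num [cf, cfa, v], map_neg]
      ring
    rw [if_neg h8]
    by_cases h9 : K = v (-1) 0
    · subst h9
      rw [if_pos rfl, show cf α β γ δ ε (v (-1) 0) = -δ from by norm_num [cf, cfa, v], map_neg]
      ring
    rw [if_neg h9]
    by_cases h10 : K = v 0 (-1)
    · subst h10
      rw [if_pos rfl, show cf α β γ δ ε (v 0 (-1)) = -ε from by norm_num [cf, cfa, v], map_neg]
      ring
    rw [if_neg h10]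
    rw [show cf α β γ δ ε K = 0 from by
      show cfa α β γ δ ε (K 0) (K 1) = 0
      rw [cfa, if_neg (fun hh => h1 ((hv 2 0).2 hh)), if_neg (fun hh => h2 ((hv 1 1).2 hh)),
        if_neg (fun hh => h3 ((hv 0 2).2 hh)), if_neg (fun hh => h4 ((hv 1 0).2 hh)),
        if_neg (fun hh => h5 ((hv 0 1).2 hh)), if_neg (fun hh => h6 ((hv (-2) 0).2 hh)),
        if_neg (fun hh => h7 ((hv (-1) (-1)).2 hh)), if_neg (fun hh => h8 ((hv 0 (-2)).2 hh)),
        if_neg (fun hh => h9 ((hv (-1) 0).2 hh)), if_neg (fun hh => h10 ((hv 0 (-1)).2 hh))]]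
    simp
  constructor
  · intro p q T
    rw [B_eq _ f P hPc (-T) q p, B_eq _ f P hPc T p q]
    exact skew (cf α β γ δ ε) f hcc T p q
  · intro p q r
    intro T U
    rw [B_eq _ f P hPc U q r, B_eq _ f P hPc T p r, B_eq _ f P hPc (T - U) p q,
      B_eq _ f P hPc T p _, B_eq _ f P hPc U q _, B_eq _ f P hPc U _ r]
    exact jacobi_core (cf α β γ δ ε) f T U p q r hf' hcc

end MPVA
end

section
/- Let f : ℝ → ℝ be continuously differentiable and nowhere vanishing, let F : ℝ → ℝ be continuously differentiable with f(x)·F'(x) = a·F(x) for all x, where a ≠ 0 is a constant, and let G : ℝ² → ℝ be continuously differentiable. Suppose G satisfies, for all x, y ∈ ℝ: (i) a·f(x)·F(x)·f(y) = f(x)·∂₁G(x,y) − f'(x)·G(x,y), and (ii) the function A(y) := G(x,y)/f(x) − f(y)F(x) (which by (i) is independent of x) satisfies f(y)·A'(y) − A(y)·f'(y) = a·f(y)·F(y) for all y. Then there exists a constant c ∈ ℝ such that G(x,y) = f(x)·f(y)·(F(x) + F(y) + c) for all x, y ∈ ℝ. -/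
/-- determination of the first-order coefficient `G₁(u,u_{10})` in Case 3
of the classification of two-dimensional scalar Hamiltonian operators of order `(−2,2)`.
Given `f : ℝ → ℝ` continuously differentiable and nowhere vanishing, `F : ℝ → ℝ`
continuously differentiable with `f·F' = a·F` for a constant `a ≠ 0`, and a continuously
differentiable `G : ℝ² → ℝ` satisfying
(i) `a·f(x)·F(x)·f(y) = f(x)·∂₁G(x,y) − f'(x)·G(x,y)` and
(ii) `f(y)·A'(y) − A(y)·f'(y) = a·f(y)·F(y)` where `A(y) := G(x,y)/f(x) − f(y)F(x)`
(independent of `x` by (i)),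
then `G(x,y) = f(x)·f(y)·(F(x) + F(y) + c)` for some constant `c`. -/
theorem second_order_G1_determined (a : ℝ) (ha : a ≠ 0) (f F : ℝ → ℝ)
    (hf : ContDiff ℝ 1 f) (hf0 : ∀ x : ℝ, f x ≠ 0)
    (hF : ContDiff ℝ 1 F) (hfF : ∀ x : ℝ, f x * deriv F x = a * F x)
    (G : ℝ × ℝ → ℝ) (hG : ContDiff ℝ 1 G)
    (h1 : ∀ x y : ℝ,
      a * f x * F x * f y = f x * deriv (fun t => G (t, y)) x - deriv f x * G (x, y))
    (h2 : ∀ x y : ℝ,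
      f y * deriv (fun t => G (x, t) / f x - f t * F x) y
        - (G (x, y) / f x - f y * F x) * deriv f y = a * f y * F y) :
    ∃ c : ℝ, ∀ x y : ℝ, G (x, y) = f x * f y * (F x + F y + c) := by
  have hfd : ∀ x : ℝ, HasDerivAt f (deriv f x) x :=
    fun x => (hf.differentiable one_ne_zero x).hasDerivAt
  have hFd : ∀ x : ℝ, HasDerivAt F (deriv F x) x :=
    fun x => (hF.differentiable one_ne_zero x).hasDerivAt
  have hGx : ∀ x y : ℝ, DifferentiableAt ℝ (fun t => G (t, y)) x := fun x y =>
    (hG.differentiable one_ne_zero (x, y)).comp x (differentiableAt_id.prodMk (differentiableAt_const y))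
  have hGy : ∀ x y : ℝ, DifferentiableAt ℝ (fun t => G (x, t)) y := fun x y =>
    (hG.differentiable one_ne_zero (x, y)).comp y ((differentiableAt_const x).prodMk differentiableAt_id)
  -- Step 1: x-constancy of x ↦ G(x,y)/f x - f y * F x
  have L1 : ∀ y x : ℝ, G (x, y) / f x - f y * F x = G (0, y) / f 0 - f y * F 0 := by
    intro y
    have hP : ∀ x, HasDerivAt (fun t => G (t, y) / f t - f y * F t) 0 x := by
      intro x
      have h3 : HasDerivAt (fun t => G (t, y)) (deriv (fun t => G (t, y)) x) x :=
        (hGx x y).hasDerivAt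
      have h4 := (h3.div (hfd x) (hf0 x)).sub ((hFd x).const_mul (f y))
      refine h4.congr_deriv ?_
      have key := h1 x y
      have keyF := hfF x
      have hfx := hf0 x
      rw [sub_eq_zero]
      have hd : deriv (fun t => G (t, y)) x * f x - G (x, y) * deriv f x
          = a * f x * F x * f y := by linear_combination -key
      have hdF : deriv F x = a * F x / f x := by
        field_simp
        linear_combination keyF
      rw [hd, hdF]
      field_simp
    intro x
    exact is_const_of_deriv_eq_zero (fun t => (hP t).differentiableAt)
      (fun t => (hP t).deriv) x 0
  -- Step 2: y-constancy of y ↦ A y / f y - F y where A y = G(x,y)/f x - f y * F x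
  have L2 : ∀ x y : ℝ,
      (G (x, y) / f x - f y * F x) / f y - F y
        = (G (x, 0) / f x - f 0 * F x) / f 0 - F 0 := by
    intro x
    have hA : ∀ y : ℝ, DifferentiableAt ℝ (fun t => G (x, t) / f x - f t * F x) y := by
      intro y
      exact (((hGy x y).div_const (f x)).sub
        ((hf.differentiable one_ne_zero y).mul_const (F x)))
    have hP : ∀ y, HasDerivAt (fun s => (G (x, s) / f x - f s * F x) / f s - F s) 0 y := by
      intro y
      have h3 : HasDerivAt (fun t => G (x, t) / f x - f t * F x)
          (deriv (fun t => G (x, t) / f x - f t * F x) y) y := (hA y).hasDerivAt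
      have h4 := (h3.div (hfd y) (hf0 y)).sub (hFd y)
      refine h4.congr_deriv ?_
      have key := h2 x y
      have keyF := hfF y
      have hfy := hf0 y
      rw [sub_eq_zero]
      have hd : deriv (fun t => G (x, t) / f x - f t * F x) y * f y
          - (G (x, y) / f x - f y * F x) * deriv f y = a * f y * F y := by
        linear_combination key
      have hdF : deriv F y = a * F y / f y := by
        field_simp
        linear_combination keyF
      rw [hd, hdF]
      field_simp
    intro y
    exact is_const_of_deriv_eq_zero (fun t => (hP t).differentiableAt)
      (fun t => (hP t).deriv) y 0
  refine ⟨G (0, 0) / (f 0 * f 0) - F 0 - F 0, fun x y => ?_⟩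
  have e1 := L1 0 x
  have e2 := L2 x y
  rw [e1] at e2
  have hfx := hf0 x
  have hfy := hf0 y
  have hf00 := hf0 0
  field_simp at e2 ⊢
  linear_combination e2
end
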